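/- Let S be a subring of a commutative ring R, I an ideal of S, f ∈ (T_n(R))[x], and fix 1 ≤ i ≤ j ≤ n. Then the (i,j)-entry of the left evaluation f(C)_ℓ lies in I for all C ∈ T_n(S) if and only if for every h with i ≤ h ≤ j, the (i,h)-entry of f_{hj}(C) lies in I for all C ∈ T_n(S), where f_{hj} ∈ R[x] is the scalar polynomial formed from the (h,j)-entries of the coefficients of f. -/
import Mathlib

open Finset Matrix Polynomial

/-- Let `S` be a subring of `R`, `I` an ideal of `S`, `f ∈ (Tₙ(R))[x]`, `i ≤ j`.
The `(i,j)`-entry of the left evaluation `f(C)_ℓ = Σ_k C^k F_k` lies in `I` for all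
`C ∈ Tₙ(S)` iff for every `h` with `i ≤ h ≤ j`, the `(i,h)`-entry of `f_{hj}(C)`
lies in `I` for all `C ∈ Tₙ(S)`. -/
theorem stmt8 (n : ℕ) (R : Type*) [CommRing R] (S : Subring R) (I : Ideal S)
    (f : Polynomial (Matrix (Fin n) (Fin n) R))
    (hf : ∀ k, (f.coeff k).BlockTriangular id)
    (i j : Fin n) (hij : i ≤ j) :
    (∀ C : Matrix (Fin n) (Fin n) R, C.BlockTriangular id → (∀ a b, C a b ∈ S) →
        ∃ s ∈ I, (s : R) = (∑ k ∈ f.support, C ^ k * f.coeff k) i j)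
    ↔ ∀ h ∈ Finset.Icc i j,
        ∀ C : Matrix (Fin n) (Fin n) R, C.BlockTriangular id → (∀ a b, C a b ∈ S) →
          ∃ s ∈ I, (s : R) =
            (Polynomial.aeval C
              (∑ k ∈ f.support, Polynomial.C (f.coeff k h j) * Polynomial.X ^ k)) i h := by
  classical
  set A : AddSubgroup R := I.toAddSubgroup.map (S.subtype.toAddMonoidHom) with hA
  have hmemA : ∀ x : R, (∃ s ∈ I, (s : R) = x) ↔ x ∈ A := by
    intro x
    simp [hA, AddSubgroup.mem_map]
  have powtri : ∀ (C : Matrix (Fin n) (Fin n) R), C.BlockTriangular id → ∀ k : ℕ,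
      (C ^ k).BlockTriangular id := by
    intro C hC k
    induction k with
    | zero => rw [pow_zero]; exact Matrix.blockTriangular_one
    | succ k IH => rw [pow_succ]; exact IH.mul hC
  set term : Matrix (Fin n) (Fin n) R → Fin n → R :=
    fun C h => ∑ k ∈ f.support, (C ^ k) i h * f.coeff k h j with hterm
  have hEntry : ∀ C : Matrix (Fin n) (Fin n) R, C.BlockTriangular id →
      (∑ k ∈ f.support, C ^ k * f.coeff k) i j = ∑ h ∈ Finset.Icc i j, term C h := by
    intro C hC
    rw [Matrix.sum_apply]
    simp only [Matrix.mul_apply]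
    rw [Finset.sum_comm]
    symm
    apply Finset.sum_subset (Finset.subset_univ _)
    intro h _ hh
    apply Finset.sum_eq_zero
    intro k _
    rw [Finset.mem_Icc, not_and_or] at hh
    rcases hh with hh | hh
    · rw [(powtri C hC k) (show (id h : Fin n) < id i from lt_of_not_ge hh), zero_mul]
    · rw [(hf k) (show (id j : Fin n) < id h from lt_of_not_ge hh), mul_zero]
  have hAeval : ∀ (C : Matrix (Fin n) (Fin n) R) (h : Fin n),
      (Polynomial.aeval C
        (∑ k ∈ f.support, Polynomial.C (f.coeff k h j) * Polynomial.X ^ k)) i h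
      = term C h := by
    intro C h
    rw [map_sum, Matrix.sum_apply]
    refine Finset.sum_congr rfl fun k _ => ?_
    rw [_root_.map_mul, aeval_C, map_pow, aeval_X, ← Algebra.smul_def, Matrix.smul_apply,
      smul_eq_mul, mul_comm]
  constructor
  · intro H
    have H' : ∀ C : Matrix (Fin n) (Fin n) R, C.BlockTriangular id → (∀ a b, C a b ∈ S) →
        (∑ h' ∈ Finset.Icc i j, term C h') ∈ A := by
      intro C hC hCS
      rw [← hEntry C hC]
      exact (hmemA _).mp (H C hC hCS)
    -- truncation
    have Htrunc : ∀ h ∈ Finset.Icc i j, ∀ C : Matrix (Fin n) (Fin n) R,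
        C.BlockTriangular id → (∀ a b, C a b ∈ S) →
        (∑ h' ∈ Finset.Icc i h, term C h') ∈ A := by
      intro h hh C hC hCS
      obtain ⟨hih, hhj⟩ := Finset.mem_Icc.mp hh
      set C' : Matrix (Fin n) (Fin n) R :=
        Matrix.of (fun a b => if a ≤ h ∧ b ≤ h then C a b else 0) with hC'
      have hC'tri : C'.BlockTriangular id := by
        intro a b hab
        simp only [hC', Matrix.of_apply]
        split
        · exact hC hab
        · rfl
      have hC'S : ∀ a b, C' a b ∈ S := by
        intro a b
        simp only [hC', Matrix.of_apply]
        split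
        · exact hCS a b
        · exact S.zero_mem
      have hpow : ∀ k : ℕ, ∀ m : Fin n,
          (C' ^ k) i m = if m ≤ h then (C ^ k) i m else 0 := by
        intro k
        induction k with
        | zero =>
          intro m
          rw [pow_zero, pow_zero]
          by_cases hm : m ≤ h
          · rw [if_pos hm]
          · rw [if_neg hm, Matrix.one_apply_ne (fun e => hm (by rw [← e]; exact hih))]
        | succ k IH =>
          intro m
          rw [pow_succ, pow_succ, Matrix.mul_apply, Matrix.mul_apply]
          by_cases hm : m ≤ h
          · rw [if_pos hm]
            refine Finset.sum_congr rfl fun p _ => ?_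
            rw [IH p]
            simp only [hC', Matrix.of_apply]
            by_cases hp : p ≤ h
            · rw [if_pos hp, if_pos (show p ≤ h ∧ m ≤ h from ⟨hp, hm⟩)]
            · rw [if_neg hp, zero_mul,
                hC (show (id m : Fin n) < id p from lt_of_le_of_lt hm (lt_of_not_ge hp)),
                mul_zero]
          · rw [if_neg hm]
            apply Finset.sum_eq_zero
            intro p _
            simp only [hC', Matrix.of_apply]
            rw [if_neg (fun hpm => hm hpm.2), mul_zero]
      have hsum : ∑ h' ∈ Finset.Icc i j, term C' h' = ∑ h' ∈ Finset.Icc i h, term C h' := by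
        rw [← Finset.sum_subset (Finset.Icc_subset_Icc_right hhj)
          (fun x hx hx' => ?_)]
        · refine Finset.sum_congr rfl fun h' hh' => ?_
          obtain ⟨_, hh'2⟩ := Finset.mem_Icc.mp hh'
          simp only [hterm]
          refine Finset.sum_congr rfl fun k _ => ?_
          rw [hpow k h', if_pos hh'2]
        ·
          simp only [hterm]
          apply Finset.sum_eq_zero
          intro k _
          have hx2 : ¬ x ≤ h := fun hxh =>
            hx' (Finset.mem_Icc.mpr ⟨(Finset.mem_Icc.mp hx).1, hxh⟩)
          rw [hpow k x, if_neg hx2, zero_mul]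
      have := H' C' hC'tri hC'S
      rwa [hsum] at this
    -- telescoping by strong induction
    have Hterm : ∀ N : ℕ, ∀ h : Fin n, (h : ℕ) = N → h ∈ Finset.Icc i j →
        ∀ C : Matrix (Fin n) (Fin n) R,
        C.BlockTriangular id → (∀ a b, C a b ∈ S) → term C h ∈ A := by
      intro N
      induction N using Nat.strong_induction_on with
      | _ N IH =>
        intro h hN hh C hC hCS
        obtain ⟨hih, hhj⟩ := Finset.mem_Icc.mp hh
        have hsplit : ∑ h' ∈ Finset.Icc i h, term C h'
            = term C h + ∑ h' ∈ Finset.Ico i h, term C h' := by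
          rw [← Finset.Ico_insert_right hih, Finset.sum_insert Finset.right_notMem_Ico]
        have h1 : (∑ h' ∈ Finset.Icc i h, term C h') ∈ A := Htrunc h hh C hC hCS
        have h2 : (∑ h' ∈ Finset.Ico i h, term C h') ∈ A := by
          apply AddSubgroup.sum_mem
          intro h' hh'
          obtain ⟨hh'1, hh'2⟩ := Finset.mem_Ico.mp hh'
          exact IH (h' : ℕ) (by rw [← hN]; exact hh'2) h' rfl
            (Finset.mem_Icc.mpr ⟨hh'1, le_of_lt (lt_of_lt_of_le hh'2 hhj)⟩) C hC hCS
        have : term C h = (∑ h' ∈ Finset.Icc i h, term C h')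
            - ∑ h' ∈ Finset.Ico i h, term C h' := by rw [hsplit]; ring
        rw [this]
        exact A.sub_mem h1 h2
    intro h hh C hC hCS
    rw [hmemA, hAeval]
    exact Hterm (h : ℕ) h rfl hh C hC hCS
  · intro H C hC hCS
    rw [hmemA, hEntry C hC]
    apply AddSubgroup.sum_mem
    intro h hh
    have := H h hh C hC hCS
    rwa [hmemA, hAeval] at this
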